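/- For every integer n ≥ 0, jQ^{(3)}_{n+1} + jQ^{(3)}_n = 3·JQ^{(3)}_{n+2}. -/

import Mathlib

open Quaternion

/-- Third order Jacobsthal numbers. -/
def J3 : ℕ → ℤ
  | 0 => 0
  | 1 => 1
  | 2 => 1
  | n + 3 => J3 (n + 2) + J3 (n + 1) + 2 * J3 n

/-- Third order Jacobsthal-Lucas numbers. -/
def jL3 : ℕ → ℤ
  | 0 => 2
  | 1 => 1
  | 2 => 5
  | n + 3 => jL3 (n + 2) + jL3 (n + 1) + 2 * jL3 n

/-- The quaternion unit `i`. -/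
noncomputable def qi : ℍ[ℝ] := ⟨0, 1, 0, 0⟩
/-- The quaternion unit `j`. -/
noncomputable def qj : ℍ[ℝ] := ⟨0, 0, 1, 0⟩
/-- The quaternion unit `k`. -/
noncomputable def qk : ℍ[ℝ] := ⟨0, 0, 0, 1⟩

/-- The `n`-th third order Jacobsthal quaternion. -/
noncomputable def JQ (n : ℕ) : ℍ[ℝ] :=
  (J3 n : ℝ) + (J3 (n + 1) : ℝ) * qi + (J3 (n + 2) : ℝ) * qj + (J3 (n + 3) : ℝ) * qk

/-- The `n`-th third order Jacobsthal-Lucas quaternion. -/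
noncomputable def jQ (n : ℕ) : ℍ[ℝ] :=
  (jL3 n : ℝ) + (jL3 (n + 1) : ℝ) * qi + (jL3 (n + 2) : ℝ) * qj + (jL3 (n + 3) : ℝ) * qk

lemma key : ∀ n : ℕ, jL3 (n + 1) + jL3 n = 3 * J3 (n + 2)
  | 0 => by decide
  | 1 => by decide
  | 2 => by decide
  | n + 3 => by
    have h0 := key n
    have h1 : jL3 (n + 2) + jL3 (n + 1) = 3 * J3 (n + 3) := key (n + 1)
    have h2 : jL3 (n + 3) + jL3 (n + 2) = 3 * J3 (n + 4) := key (n + 2)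
    have r1 : jL3 (n + 4) = jL3 (n + 3) + jL3 (n + 2) + 2 * jL3 (n + 1) := rfl
    have r2 : jL3 (n + 3) = jL3 (n + 2) + jL3 (n + 1) + 2 * jL3 n := rfl
    have rJ : J3 (n + 5) = J3 (n + 4) + J3 (n + 3) + 2 * J3 (n + 2) := rfl
    show jL3 (n + 4) + jL3 (n + 3) = 3 * J3 (n + 5)
    rw [r1, r2, rJ]; linarith

theorem third_order_jacobsthal_lucas_quaternion_sum_identity (n : ℕ) :
    jQ (n + 1) + jQ n = 3 * JQ (n + 2) := by
  have e : ∀ m : ℕ, (jL3 (m + 1) : ℝ) + jL3 m = 3 * J3 (m + 2) := fun m => by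
    exact_mod_cast congrArg (Int.cast : ℤ → ℝ) (key m)
  have e0 := e n
  have e1 := e (n + 1)
  have e2 := e (n + 2)
  have e3 := e (n + 3)
  simp only [show n+1+1 = n+2 from rfl, show n+1+2 = n+3 from rfl, show n+1+3 = n+4 from rfl,
    show n+2+1 = n+3 from rfl, show n+2+2 = n+4 from rfl, show n+2+3 = n+5 from rfl,
    show n+3+1 = n+4 from rfl, show n+4+1 = n+5 from rfl] at *
  rw [show (3:ℍ[ℝ]) = ((3:ℝ):ℍ[ℝ]) by rw [show ((3:ℝ):ℍ[ℝ]) = (((3:ℕ):ℝ):ℍ[ℝ]) by norm_num]; norm_cast]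
  ext <;> simp [jQ, JQ, Quaternion.re_mul, Quaternion.imI_mul, Quaternion.imJ_mul, Quaternion.imK_mul,
    show n+1+1 = n+2 from rfl, show n+1+2 = n+3 from rfl, show n+1+3 = n+4 from rfl,
    show n+2+1 = n+3 from rfl, show n+2+2 = n+4 from rfl, show n+2+3 = n+5 from rfl] <;> simp [qi, qj, qk] <;>
    linarith
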